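/- Let m ≤ M, U ∈ ℝ^{m×n}, 0 ≤ s ≤ m·n, and let Φ* minimize ‖U − Φ‖_F over all Φ ∈ ℝ^{m×n} with ‖Φ‖₀ ≤ s. Let ε₁ = inf over all F ∈ ℝ^{m×M} and R ∈ ℝ^{M×n} with ‖R‖₀ ≤ s of ‖U − F·R‖_F and ε₂ = ‖U − Φ*‖_F. If ε₁ = ε₂, then (U − Φ*)·(Φ*)ᵀ = 0. -/

import Mathlib

open Matrix

/-- Number of nonzero entries of a real matrix (the ℓ₀ "norm"). -/
noncomputable def l0 {m n : ℕ} (A : Matrix (Fin m) (Fin n) ℝ) : ℕ :=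
  (Finset.univ.filter fun p : Fin m × Fin n => A p.1 p.2 ≠ 0).card

/-- Frobenius norm of a real matrix. -/
noncomputable def frobNorm {m n : ℕ} (A : Matrix (Fin m) (Fin n) ℝ) : ℝ :=
  Real.sqrt (∑ i, ∑ j, (A i j) ^ 2)

lemma sum_dite_embed {M m : ℕ} (h : m ≤ M) (g : Fin m → ℝ) :
    ∑ j : Fin M, (if hj : (j : ℕ) < m then g ⟨j, hj⟩ else 0) = ∑ i : Fin m, g i := by
  have h1 : (∑ i : Fin m, g i)
      = ∑ i : Fin m, (fun j => if hj : j < m then g ⟨j, hj⟩ else 0) (i : ℕ) := by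
    apply Finset.sum_congr rfl; intro i _; simp
  rw [h1, Fin.sum_univ_eq_sum_range (fun j => if hj : j < m then g ⟨j, hj⟩ else 0) M,
      Fin.sum_univ_eq_sum_range (fun j => if hj : j < m then g ⟨j, hj⟩ else 0) m]
  refine (Finset.sum_subset (Finset.range_subset_range.2 h) ?_).symm
  intro x _ hx
  rw [Finset.mem_range] at hx
  simp [hx]

theorem stmt10 (m M n s : ℕ) (hmM : m ≤ M) (hs : s ≤ m * n)
    (U Φstar : Matrix (Fin m) (Fin n) ℝ)
    -- `Φstar` minimizes `‖U - Φ‖_F` over matrices with at most `s` nonzero entries: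
    (hΦcard : l0 Φstar ≤ s)
    (hΦmin : ∀ Φ : Matrix (Fin m) (Fin n) ℝ, l0 Φ ≤ s →
      frobNorm (U - Φstar) ≤ frobNorm (U - Φ))
    -- ε₁ = ε₂ :
    (heq : sInf {e : ℝ | ∃ (F : Matrix (Fin m) (Fin M) ℝ) (R : Matrix (Fin M) (Fin n) ℝ),
        l0 R ≤ s ∧ e = frobNorm (U - F * R)} = frobNorm (U - Φstar)) :
    (U - Φstar) * Φstarᵀ = 0 := by
  rcases Nat.eq_zero_or_pos m with hm | hm
  · subst hm; ext i j; exact i.elim0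
  -- Key: Φ* beats any G * Φ* with G : m × m
  have hkey : ∀ G : Matrix (Fin m) (Fin m) ℝ,
      frobNorm (U - Φstar) ≤ frobNorm (U - G * Φstar) := by
    intro G
    set F : Matrix (Fin m) (Fin M) ℝ :=
      Matrix.of fun i j => if h : (j : ℕ) < m then G i ⟨j, h⟩ else 0 with hF
    set R : Matrix (Fin M) (Fin n) ℝ :=
      Matrix.of fun j k => if h : (j : ℕ) < m then Φstar ⟨j, h⟩ k else 0 with hR
    have hFR : F * R = G * Φstar := by
      ext i k
      simp only [Matrix.mul_apply, hF, hR, Matrix.of_apply]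
      rw [← sum_dite_embed hmM (fun j : Fin m => G i j * Φstar j k)]
      apply Finset.sum_congr rfl
      intro j _
      by_cases hj : (j : ℕ) < m
      · rw [dif_pos hj, dif_pos hj, dif_pos hj]
      · rw [dif_neg hj, dif_neg hj, dif_neg hj, zero_mul]
    have hRcard : l0 R ≤ s := by
      refine le_trans ?_ hΦcard
      unfold l0
      apply Finset.card_le_card_of_injOn
        (fun p : Fin M × Fin n => (⟨(p.1 : ℕ) % m, Nat.mod_lt _ hm⟩, p.2))
      · intro p hp
        simp only [Finset.mem_filter, Finset.mem_univ, true_and] at hp ⊢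
        by_cases h1 : (p.1 : ℕ) < m
        · simp only [hR, Matrix.of_apply, dif_pos h1] at hp
          have hp2 : ∃ (x : (p.1 : ℕ) < m), ¬Φstar ⟨p.1, x⟩ p.2 = 0 := by
            simpa [Nat.mod_eq_of_lt h1] using hp
          obtain ⟨_, hx⟩ := hp2
          simpa [Nat.mod_eq_of_lt h1] using hx
        · simp [hR, dif_neg h1] at hp
          obtain ⟨hx, _⟩ := hp; exact absurd hx h1
      · intro p hp q hq hpq
        have hp' : R p.1 p.2 ≠ 0 := by simpa using hp
        have hq' : R q.1 q.2 ≠ 0 := by simpa using hq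
        have h1 : (p.1 : ℕ) < m := by
          by_contra h; simp [hR, dif_neg h] at hp'
        have h2 : (q.1 : ℕ) < m := by
          by_contra h; simp [hR, dif_neg h] at hq'
        have := congrArg Prod.fst hpq
        have h3 := congrArg Prod.snd hpq
        simp only at this h3
        have h4 : (p.1 : ℕ) % m = (q.1 : ℕ) % m := congrArg Fin.val this
        rw [Nat.mod_eq_of_lt h1, Nat.mod_eq_of_lt h2] at h4
        exact Prod.ext (Fin.ext h4) h3
    have hmem : frobNorm (U - F * R) ∈ {e : ℝ | ∃ (F : Matrix (Fin m) (Fin M) ℝ)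
        (R : Matrix (Fin M) (Fin n) ℝ), l0 R ≤ s ∧ e = frobNorm (U - F * R)} :=
      ⟨F, R, hRcard, rfl⟩
    have hbdd : BddBelow {e : ℝ | ∃ (F : Matrix (Fin m) (Fin M) ℝ)
        (R : Matrix (Fin M) (Fin n) ℝ), l0 R ≤ s ∧ e = frobNorm (U - F * R)} := by
      refine ⟨0, fun e he => ?_⟩
      obtain ⟨F', R', _, rfl⟩ := he
      exact Real.sqrt_nonneg _
    have := csInf_le hbdd hmem
    rw [heq, hFR] at this
    exact this
  -- Now derive the first-order condition entrywise.
  ext i k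
  simp only [Matrix.mul_apply, Matrix.transpose_apply, Matrix.sub_apply, Matrix.zero_apply]
  set A : Matrix (Fin m) (Fin n) ℝ := U - Φstar with hA
  set C : Matrix (Fin m) (Fin n) ℝ :=
    Matrix.of fun a j => if a = i then Φstar k j else 0 with hC
  set X : ℝ := ∑ a, ∑ j, A a j * C a j with hX
  set Y : ℝ := ∑ a, ∑ j, (C a j) ^ 2 with hY
  have hYnn : 0 ≤ Y := Finset.sum_nonneg fun _ _ => Finset.sum_nonneg fun _ _ => sq_nonneg _
  have hineq : ∀ t : ℝ, 0 ≤ t ^ 2 * Y - 2 * t * X := by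
    intro t
    set G : Matrix (Fin m) (Fin m) ℝ :=
      Matrix.of fun a b => (if a = b then (1 : ℝ) else 0) + (if a = i ∧ b = k then t else 0) with hG
    have hGΦ : G * Φstar = Φstar + t • C := by
      ext a j
      simp only [Matrix.mul_apply, hG, Matrix.of_apply, add_mul, Finset.sum_add_distrib,
        ite_mul, one_mul, zero_mul, Finset.sum_ite_eq, Finset.mem_univ, if_true,
        Matrix.add_apply, Matrix.smul_apply, hC, smul_eq_mul]
      by_cases ha : a = i <;> simp [ha, ite_and, mul_comm]
    have h1 := hkey G
    rw [hGΦ] at h1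
    have h2 : U - (Φstar + t • C) = A - t • C := by rw [hA]; abel
    rw [h2] at h1
    unfold frobNorm at h1
    replace h1 := (Real.sqrt_le_sqrt_iff (by positivity)).1 h1
    have expand : ∑ a, ∑ j, ((A - t • C) a j) ^ 2
        = (∑ a, ∑ j, (A a j) ^ 2) - 2 * t * X + t ^ 2 * Y := by
      rw [hX, hY, Finset.mul_sum, Finset.mul_sum, ← Finset.sum_sub_distrib,
        ← Finset.sum_add_distrib]
      apply Finset.sum_congr rfl; intro a _
      rw [Finset.mul_sum, Finset.mul_sum, ← Finset.sum_sub_distrib, ← Finset.sum_add_distrib]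
      apply Finset.sum_congr rfl; intro j _
      simp only [Matrix.sub_apply, Matrix.smul_apply, smul_eq_mul]
      ring
    rw [expand] at h1
    linarith
  have hX0 : X = 0 := by
    have h1 := hineq (X / (Y + 1))
    have hY1 : (0 : ℝ) < Y + 1 := by linarith
    have hne : (Y + 1) ≠ 0 := ne_of_gt hY1
    have e : (X / (Y + 1)) ^ 2 * Y - 2 * (X / (Y + 1)) * X
        = (X ^ 2 * Y - 2 * X ^ 2 * (Y + 1)) / ((Y + 1) ^ 2) := by
      field_simp
    rw [e] at h1
    have h3 : 0 ≤ X ^ 2 * Y - 2 * X ^ 2 * (Y + 1) := by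
      have := (le_div_iff₀ (by positivity : (0:ℝ) < (Y + 1) ^ 2)).1 h1
      linarith
    have h4 : X ^ 2 ≤ 0 := by nlinarith
    have h5 : X ^ 2 = 0 := le_antisymm h4 (sq_nonneg X)
    exact pow_eq_zero_iff two_ne_zero |>.mp h5
  -- finally identify the goal with X
  have : X = ∑ j, A i j * Φstar k j := by
    rw [hX]
    rw [Finset.sum_eq_single i]
    · apply Finset.sum_congr rfl; intro j _; simp [hC]
    · intro a _ ha
      apply Finset.sum_eq_zero; intro j _; simp [hC, ha]
    · intro h; exact absurd (Finset.mem_univ i) h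
  rw [this] at hX0
  simpa [hA] using hX0
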